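/- Let K₁ denote the modified Bessel function given by K₁(y) = ∫₀^∞ exp(−y·cosh t)·cosh t dt for y > 0. For ρ > 0 and θ ∈ ℝ, set q(t) = exp(iθ − ρ·(t + 1/t)) for t > 0. Then the integral ∫₀^∞ q(t)/(1 − q(t)) dt converges absolutely, the series Σ_{n=1}^∞ e^{i·n·θ}·K₁(2nρ) converges absolutely, and ∫₀^∞ q(t)/(1 − q(t)) dt = 2·Σ_{n=1}^∞ e^{i·n·θ}·K₁(2nρ). -/

import Mathlib

open MeasureTheory Set Real

noncomputable def gg (c t : ℝ) : ℝ := Real.exp (-(c * (t + 1 / t)))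

lemma gg_pos (c t : ℝ) : 0 < gg c t := Real.exp_pos _

lemma gg_contOn (c : ℝ) : ContinuousOn (gg c) (Ioi 0) := by
  apply Real.continuous_exp.comp_continuousOn
  apply ContinuousOn.neg
  apply ContinuousOn.mul continuousOn_const
  exact continuousOn_id.add (continuousOn_const.div continuousOn_id (fun x hx => ne_of_gt hx))

lemma gg_le (c : ℝ) (hc : 0 < c) {t : ℝ} (ht : 0 < t) : gg c t ≤ Real.exp (-(c * t)) := by
  apply Real.exp_le_exp.mpr
  have h1t : 0 < 1 / t := by positivity
  nlinarith

lemma gg_integrable (c : ℝ) (hc : 0 < c) : IntegrableOn (gg c) (Ioi 0) := by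
  apply Integrable.mono' (g := fun t => Real.exp (-(c * t)))
  · exact (by simpa [neg_mul] using exp_neg_integrableOn_Ioi 0 hc : IntegrableOn (fun t => Real.exp (-(c * t))) (Ioi 0))
  · exact (gg_contOn c).aestronglyMeasurable measurableSet_Ioi
  · filter_upwards [ae_restrict_mem measurableSet_Ioi] with t ht
    rw [Real.norm_of_nonneg (gg_pos c t).le]
    exact gg_le c hc ht

lemma gg_comp_exp (c x : ℝ) : gg c (Real.exp x) = Real.exp (-(2 * c * Real.cosh x)) := by
  unfold gg
  rw [one_div, ← Real.exp_neg, Real.cosh_eq]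
  ring_nf

lemma h_integrable (c : ℝ) (hc : 0 < c) :
    Integrable (fun x => |Real.exp x| • gg c (Real.exp x)) := by
  rw [← integrableOn_univ]
  refine (integrableOn_image_iff_integrableOn_abs_deriv_smul MeasurableSet.univ
    (fun x _ => (Real.hasDerivAt_exp x).hasDerivWithinAt) Real.exp_injective.injOn (gg c)).mp ?_
  rw [image_univ, Real.range_exp]
  exact gg_integrable c hc

lemma gg_integral (c : ℝ) (hc : 0 < c) :
    ∫ t in Ioi (0:ℝ), gg c t
      = 2 * ∫ s in Ioi (0:ℝ), Real.exp (-(2 * c) * Real.cosh s) * Real.cosh s := by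
  have himg : Real.exp '' univ = Ioi 0 := by rw [image_univ, Real.range_exp]
  have h1 : ∫ t in Ioi (0:ℝ), gg c t = ∫ x, |Real.exp x| • gg c (Real.exp x) := by
    rw [← himg, integral_image_eq_integral_abs_deriv_smul MeasurableSet.univ
      (fun x _ => (Real.hasDerivAt_exp x).hasDerivWithinAt) Real.exp_injective.injOn,
      Measure.restrict_univ]
  have hint := h_integrable c hc
  have h2 : ∫ x, |Real.exp x| • gg c (Real.exp x)
      = (∫ x in Iic (0:ℝ), |Real.exp x| • gg c (Real.exp x))
        + ∫ x in Ioi (0:ℝ), |Real.exp x| • gg c (Real.exp x) := by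
    rw [← intervalIntegral.integral_Iic_add_Ioi hint.integrableOn hint.integrableOn]
  have h3 : (∫ x in Iic (0:ℝ), |Real.exp x| • gg c (Real.exp x))
      = ∫ x in Ioi (0:ℝ), |Real.exp (-x)| • gg c (Real.exp (-x)) := by
    simpa using (integral_comp_neg_Ioi (0:ℝ) (fun x => |Real.exp x| • gg c (Real.exp x))).symm
  rw [h1, h2, h3, ← integral_add]
  · rw [← MeasureTheory.integral_const_mul]
    apply setIntegral_congr_fun measurableSet_Ioi
    intro x _
    simp only
    rw [abs_of_pos (Real.exp_pos _), abs_of_pos (Real.exp_pos _), smul_eq_mul, smul_eq_mul,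
      gg_comp_exp, gg_comp_exp, Real.cosh_neg]
    have h4 : Real.exp (-x) + Real.exp x = 2 * Real.cosh x := by rw [Real.cosh_eq]; ring
    have h5 : -(2*c) * Real.cosh x = -(2*c*Real.cosh x) := by ring
    rw [h5]
    linear_combination Real.exp (-(2*c*Real.cosh x)) * h4
  · exact (hint.comp_neg).integrableOn
  · exact hint.integrableOn

lemma two_le_add_inv {t : ℝ} (ht : 0 < t) : 2 ≤ t + 1 / t := by
  have h1 : t * (1 / t) = 1 := mul_one_div_cancel (ne_of_gt ht)
  nlinarith [sq_nonneg (t - 1)]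

lemma gg_le_exp {c t : ℝ} (hc : 0 ≤ c) (ht : 0 < t) : gg c t ≤ Real.exp (-(2 * c)) := by
  apply Real.exp_le_exp.mpr
  have := two_le_add_inv ht
  nlinarith

lemma gg_mul (a b t : ℝ) : gg (a + b) t = gg a t * gg b t := by
  unfold gg; rw [← Real.exp_add]; ring_nf

lemma gg_pow_bound {c t : ℝ} (hc : 0 < c) (ht : 0 < t) (n : ℕ) :
    gg ((n + 1) * c) t ≤ Real.exp (-(2 * c)) ^ n * gg c t := by
  have h : ((n : ℝ) + 1) * c = n * c + c := by ring
  rw [h, gg_mul, ← Real.exp_nat_mul]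
  apply mul_le_mul_of_nonneg_right _ (gg_pos c t).le
  apply Real.exp_le_exp.mpr
  have := two_le_add_inv ht
  have hnc : 0 ≤ (n : ℝ) * c := by positivity
  nlinarith

lemma gg_sum (ρ : ℝ) (hρ : 0 < ρ) :
    Summable (fun n : ℕ => ∫ t in Ioi (0:ℝ), gg (((n : ℝ) + 1) * ρ) t) := by
  have hE1 : Real.exp (-(2 * ρ)) < 1 := Real.exp_lt_one_iff.mpr (by linarith)
  apply Summable.of_nonneg_of_le
    (fun n => setIntegral_nonneg measurableSet_Ioi (fun t _ => (gg_pos _ t).le))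
    (fun n => ?_)
    (((summable_geometric_of_lt_one (Real.exp_nonneg _) hE1).mul_right
      (∫ t in Ioi (0:ℝ), gg ρ t)))
  calc ∫ t in Ioi (0:ℝ), gg (((n : ℝ) + 1) * ρ) t
      ≤ ∫ t in Ioi (0:ℝ), Real.exp (-(2 * ρ)) ^ n * gg ρ t := by
        apply setIntegral_mono_on
          (gg_integrable _ (by positivity)) ((gg_integrable ρ hρ).const_mul _)
          measurableSet_Ioi
        exact fun t ht => gg_pow_bound hρ ht n
    _ = Real.exp (-(2 * ρ)) ^ n * ∫ t in Ioi (0:ℝ), gg ρ t := by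
        rw [MeasureTheory.integral_const_mul]

/-- with `q(t) = exp(iθ − ρ(t + 1/t))`, `ρ > 0`, the integral
`∫₀^∞ q/(1−q) dt` converges absolutely, the series `Σ_{n≥1} e^{inθ}K₁(2nρ)`
converges absolutely, and the integral equals twice the sum, where
`K₁(y) = ∫₀^∞ exp(−y·cosh t)·cosh t dt`. -/
theorem stmt15 (K₁ : ℝ → ℝ)
    (hK₁ : ∀ y : ℝ, 0 < y →
      K₁ y = ∫ t in Set.Ioi (0 : ℝ), Real.exp (-y * Real.cosh t) * Real.cosh t)
    (ρ θ : ℝ) (hρ : 0 < ρ)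
    (q : ℝ → ℂ)
    (hq : ∀ t : ℝ, q t = Complex.exp (Complex.I * (θ : ℂ) - ((ρ * (t + 1 / t) : ℝ) : ℂ))) :
    MeasureTheory.IntegrableOn (fun t : ℝ => q t / (1 - q t)) (Set.Ioi 0)
    ∧ Summable (fun n : ℕ =>
        ‖Complex.exp (Complex.I * ((n : ℂ) + 1) * (θ : ℂ)) * (K₁ (2 * (n + 1) * ρ) : ℂ)‖)
    ∧ (∫ t in Set.Ioi (0 : ℝ), q t / (1 - q t))
        = 2 * ∑' n : ℕ, Complex.exp (Complex.I * ((n : ℂ) + 1) * (θ : ℂ)) * (K₁ (2 * (n + 1) * ρ) : ℂ) := by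
  -- basic facts
  have hpos : ∀ n : ℕ, (0:ℝ) < ((n : ℝ) + 1) * ρ := fun n => by positivity
  have hqpow : ∀ (n : ℕ) (t : ℝ), (q t) ^ (n + 1)
      = Complex.exp (Complex.I * ((n : ℂ) + 1) * (θ : ℂ)) * ((gg (((n : ℝ) + 1) * ρ) t : ℝ) : ℂ) := by
    intro n t
    rw [hq t]
    unfold gg
    rw [Complex.ofReal_exp, ← Complex.exp_nat_mul, ← Complex.exp_add]
    congr 1
    push_cast
    ring
  have hnormq : ∀ (n : ℕ) (t : ℝ), ‖(q t) ^ (n + 1)‖ = gg (((n : ℝ) + 1) * ρ) t := by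
    intro n t
    rw [hqpow n t, norm_mul, Complex.norm_exp,
      Complex.norm_real, Real.norm_eq_abs, abs_of_pos (gg_pos _ _)]
    have : (Complex.I * ((n : ℂ) + 1) * (θ : ℂ)).re = 0 := by simp
    rw [this, Real.exp_zero, one_mul]
  have hnq : ∀ t : ℝ, ‖q t‖ = gg ρ t := by
    intro t
    have := hnormq 0 t
    simpa using this
  have hqlt : ∀ t : ℝ, 0 < t → ‖q t‖ < 1 := by
    intro t ht
    rw [hnq t]
    exact lt_of_le_of_lt (gg_le_exp hρ.le ht) (Real.exp_lt_one_iff.mpr (by linarith))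
  -- integrability of each power
  have hFint : ∀ n : ℕ, MeasureTheory.Integrable (fun t => (q t) ^ (n + 1))
      (MeasureTheory.volume.restrict (Set.Ioi 0)) := by
    intro n
    have : (fun t : ℝ => (q t) ^ (n + 1))
        = fun t => Complex.exp (Complex.I * ((n : ℂ) + 1) * (θ : ℂ)) * ((gg (((n : ℝ) + 1) * ρ) t : ℝ) : ℂ) :=
      funext (hqpow n)
    rw [this]
    exact ((gg_integrable _ (hpos n)).ofReal.const_mul _)
  -- norm integrals
  have hJnorm : ∀ n : ℕ, (∫ t in Ioi (0:ℝ), ‖(q t) ^ (n + 1)‖)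
      = ∫ t in Ioi (0:ℝ), gg (((n : ℝ) + 1) * ρ) t := by
    intro n
    exact integral_congr_ae (Filter.Eventually.of_forall (fun t => hnormq n t))
  have hsumJ := gg_sum ρ hρ
  -- value of each integral
  have hK : ∀ n : ℕ, (∫ t in Ioi (0:ℝ), gg (((n : ℝ) + 1) * ρ) t) = 2 * K₁ (2 * ((n:ℝ) + 1) * ρ) := by
    intro n
    have h2 : (0:ℝ) < 2 * ((n:ℝ) + 1) * ρ := by positivity
    rw [gg_integral _ (hpos n), hK₁ _ h2,
      show (2 * ((n:ℝ) + 1) * ρ) = 2 * (((n:ℝ) + 1) * ρ) from by ring]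
  have hKnonneg : ∀ n : ℕ, 0 ≤ K₁ (2 * ((n:ℝ) + 1) * ρ) := by
    intro n
    have := hK n
    have hJ : 0 ≤ ∫ t in Ioi (0:ℝ), gg (((n : ℝ) + 1) * ρ) t :=
      setIntegral_nonneg measurableSet_Ioi (fun t _ => (gg_pos _ t).le)
    linarith
  -- summability of the K₁ series (part 2)
  have hnormK : ∀ n : ℕ,
      ‖Complex.exp (Complex.I * ((n : ℂ) + 1) * (θ : ℂ)) * (K₁ (2 * ((n:ℝ) + 1) * ρ) : ℂ)‖
        = (1/2) * ∫ t in Ioi (0:ℝ), gg (((n : ℝ) + 1) * ρ) t := by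
    intro n
    rw [norm_mul, Complex.norm_exp,
      Complex.norm_real, Real.norm_eq_abs, abs_of_nonneg (hKnonneg n), hK n]
    have : (Complex.I * ((n : ℂ) + 1) * (θ : ℂ)).re = 0 := by simp
    rw [this, Real.exp_zero, one_mul]
    ring
  have part2 : Summable (fun n : ℕ =>
      ‖Complex.exp (Complex.I * ((n : ℂ) + 1) * (θ : ℂ)) * (K₁ (2 * ((n:ℝ) + 1) * ρ) : ℂ)‖) := by
    apply Summable.congr (hsumJ.mul_left (1/2))
    intro n
    exact (hnormK n).symm
  -- pointwise geometric series
  have hptwise : ∀ t ∈ Ioi (0:ℝ), (∑' n : ℕ, (q t) ^ (n + 1)) = q t / (1 - q t) := by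
    intro t ht
    have hlt := hqlt t ht
    have h := (hasSum_geometric_of_norm_lt_one hlt).mul_left (q t)
    have h2 : (fun n : ℕ => q t * q t ^ n) = fun n : ℕ => q t ^ (n + 1) := by
      funext n; rw [pow_succ']
    rw [h2] at h
    rw [h.tsum_eq, div_eq_mul_inv]
  -- swap sum and integral
  have hsumnorm : Summable (fun n : ℕ => ∫ t in Ioi (0:ℝ), ‖(q t) ^ (n + 1)‖) := by
    apply Summable.congr hsumJ
    intro n
    exact (hJnorm n).symm
  have hswap := MeasureTheory.integral_tsum_of_summable_integral_norm hFint hsumnorm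
  -- part 1 : integrability of q/(1-q)
  have hgcont : ContinuousOn (fun t : ℝ => ((gg ρ t : ℝ) : ℂ)) (Ioi 0) :=
    Complex.continuous_ofReal.comp_continuousOn (gg_contOn ρ)
  have hqeq : q = fun t : ℝ => Complex.exp (Complex.I * (θ : ℂ)) * ((gg ρ t : ℝ) : ℂ) := by
    funext t
    have := hqpow 0 t
    simpa using this
  have hqcont : ContinuousOn q (Ioi 0) := by
    rw [hqeq]; exact continuousOn_const.mul hgcont
  have hne : ∀ t ∈ Ioi (0:ℝ), (1 - q t) ≠ 0 := by
    intro t ht h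
    have hq1 : q t = 1 := by linear_combination -h
    have h4 := hqlt t ht
    rw [hq1] at h4
    simp at h4
  have hcontdiv : ContinuousOn (fun t : ℝ => q t / (1 - q t)) (Ioi 0) :=
    hqcont.div (continuousOn_const.sub hqcont) hne
  have hEpos : (0:ℝ) < 1 - Real.exp (-(2 * ρ)) := by
    have := Real.exp_lt_one_iff.mpr (show -(2*ρ) < 0 by linarith)
    linarith
  have part1 : MeasureTheory.IntegrableOn (fun t : ℝ => q t / (1 - q t)) (Set.Ioi 0) := by
    apply MeasureTheory.Integrable.mono'
      (((gg_integrable ρ hρ).const_mul ((1 - Real.exp (-(2 * ρ)))⁻¹)))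
      (hcontdiv.aestronglyMeasurable measurableSet_Ioi)
    filter_upwards [MeasureTheory.ae_restrict_mem measurableSet_Ioi] with t ht
    rw [norm_div]
    have h1 : ‖q t‖ = gg ρ t := hnq t
    have h2 : 1 - Real.exp (-(2 * ρ)) ≤ ‖1 - q t‖ := by
      have := norm_sub_norm_le (1:ℂ) (q t)
      have h3 : ‖q t‖ ≤ Real.exp (-(2*ρ)) := by rw [h1]; exact gg_le_exp hρ.le ht
      simp only [norm_one] at this
      linarith
    calc ‖q t‖ / ‖1 - q t‖ ≤ ‖q t‖ / (1 - Real.exp (-(2 * ρ))) :=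
          div_le_div_of_nonneg_left (norm_nonneg _) hEpos h2
      _ = (1 - Real.exp (-(2 * ρ)))⁻¹ * gg ρ t := by rw [h1]; ring
  refine ⟨part1, by exact_mod_cast part2, ?_⟩
  -- part 3
  have e1 : (∫ t in Ioi (0:ℝ), q t / (1 - q t)) = ∫ t in Ioi (0:ℝ), (∑' n : ℕ, (q t) ^ (n + 1)) :=
    (setIntegral_congr_fun measurableSet_Ioi (fun t ht => (hptwise t ht).symm))
  have e2 : ∀ n : ℕ, (∫ t in Ioi (0:ℝ), (q t) ^ (n + 1))
      = Complex.exp (Complex.I * ((n : ℂ) + 1) * (θ : ℂ)) * ((2 * K₁ (2 * ((n:ℝ) + 1) * ρ) : ℝ) : ℂ) := by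
    intro n
    rw [show (fun t : ℝ => (q t) ^ (n + 1))
        = fun t => Complex.exp (Complex.I * ((n : ℂ) + 1) * (θ : ℂ)) * ((gg (((n : ℝ) + 1) * ρ) t : ℝ) : ℂ)
      from funext (hqpow n)]
    rw [MeasureTheory.integral_const_mul]
    congr 1
    rw [← hK n]
    exact integral_ofReal
  rw [e1, ← hswap]
  rw [tsum_congr e2]
  rw [show (fun n : ℕ => Complex.exp (Complex.I * ((n : ℂ) + 1) * (θ : ℂ))
        * ((2 * K₁ (2 * ((n:ℝ) + 1) * ρ) : ℝ) : ℂ))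
      = fun n : ℕ => 2 * (Complex.exp (Complex.I * ((n : ℂ) + 1) * (θ : ℂ))
        * ((K₁ (2 * ((n:ℝ) + 1) * ρ) : ℝ) : ℂ)) from by
    funext n; push_cast; ring]
  rw [tsum_mul_left]
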